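/- Let B be a one-dimensional fractional Brownian motion with Hurst parameter H ∈ (0,1) and ΔB_l = B_{lh} − B_{(l−1)h} on a uniform grid. For every even positive integer m there exists a constant C = C(m), independent of j, k, h, such that ‖ Σ_{l=j+1}^{k} (ΔB_l)^m ‖_{L²(Ω)} ≤ C·h^{mH − 1}·|t_k − t_j|, where t_l = lh. -/

import Mathlib

open MeasureTheory ProbabilityTheory

/-- `B` is a fractional Brownian motion with Hurst parameter `H`: a measurable centered
Gaussian process with the fBm covariance function. -/
def IsFractionalBM {Ω : Type*} [MeasurableSpace Ω] (P : Measure Ω) (H : ℝ)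
    (B : Ω → ℝ → ℝ) : Prop :=
  (∀ t : ℝ, Measurable fun ω => B ω t) ∧
  (∀ (k : ℕ) (c : Fin k → ℝ) (ts : Fin k → ℝ), ∃ v : NNReal,
    Measure.map (fun ω => ∑ i, c i * B ω (ts i)) P = gaussianReal 0 v) ∧
  (∀ s t : ℝ, 0 ≤ s → 0 ≤ t →
    ∫ ω, B ω t * B ω s ∂P = (t ^ (2 * H) + s ^ (2 * H) - |t - s| ^ (2 * H)) / 2)

section FbmAux
open Real
open scoped NNReal ENNReal


noncomputable def gaussMoment (k : ℕ) : ℝ := ∫ x, x ^ k ∂(gaussianReal 0 1)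

lemma integrable_pow_gaussianReal (v : ℝ≥0) (k : ℕ) :
    Integrable (fun x => x ^ k) (gaussianReal 0 v) := by
  by_cases hv : v = 0
  · subst hv
    rw [gaussianReal_zero_var]
    refine (integrable_const ((0:ℝ) ^ k)).congr ?_
    rw [Filter.EventuallyEq, ae_dirac_eq]
    simp
  · rw [gaussianReal_of_var_ne_zero _ hv,
      integrable_withDensity_iff (measurable_gaussianPDF _ _)
        (Filter.Eventually.of_forall fun x => ENNReal.ofReal_lt_top)]
    have hb : (0:ℝ) < (2 * (v:ℝ))⁻¹ := by
      have : (0:ℝ) < (v:ℝ) := by positivity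
      positivity
    have key : Integrable
        (fun x : ℝ => (Real.sqrt (2 * π * v))⁻¹ *
          (x ^ (k:ℝ) * Real.exp (-(2*(v:ℝ))⁻¹ * x ^ 2))) volume :=
      (integrable_rpow_mul_exp_neg_mul_sq hb
        (lt_of_lt_of_le neg_one_lt_zero (Nat.cast_nonneg k))).const_mul _
    refine key.congr (Filter.Eventually.of_forall fun x => ?_)
    simp only [gaussianPDF_def, gaussianPDFReal_def]
    rw [ENNReal.toReal_ofReal (by positivity), sub_zero, Real.rpow_natCast]
    have harg : -(2*(v:ℝ))⁻¹ * x ^ 2 = -x ^ 2 / (2*(v:ℝ)) := by ring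
    rw [harg]
    ring

lemma integral_pow_gaussianReal (v : ℝ≥0) (k : ℕ) :
    ∫ x, x ^ k ∂(gaussianReal 0 v) = Real.sqrt v ^ k * gaussMoment k := by
  have hmap : (gaussianReal 0 1).map (fun x => Real.sqrt v * x) = gaussianReal 0 v := by
    rw [show (fun x : ℝ => Real.sqrt v * x) = (Real.sqrt v * ·) from rfl,
      gaussianReal_map_const_mul]
    congr 1
    · simp
    · rw [mul_one]
      exact NNReal.coe_injective (by simp [Real.sq_sqrt v.coe_nonneg])
  rw [← hmap, integral_map (by fun_prop)
    (Measurable.aestronglyMeasurable (by fun_prop : Measurable fun x : ℝ => x ^ k))]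
  simp_rw [mul_pow]
  rw [integral_const_mul]
  rfl

lemma gaussMoment_two_pos : 0 < gaussMoment 2 := by
  rw [gaussMoment]
  rw [integral_pos_iff_support_of_nonneg (fun x => sq_nonneg x)
    (integrable_pow_gaussianReal 1 2)]
  have hsupp : Function.support (fun x : ℝ => x ^ 2) = {0}ᶜ := by
    ext x; simp [Function.mem_support]
  rw [hsupp]
  have h0 : gaussianReal 0 1 {(0:ℝ)} = 0 := by
    rw [gaussianReal_of_var_ne_zero _ one_ne_zero]
    exact withDensity_absolutelyContinuous _ _ Real.volume_singleton
  rw [prob_compl_eq_one_sub (measurableSet_singleton 0), h0]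
  simp

lemma incr_moment {Ω : Type*} [MeasurableSpace Ω] (P : Measure Ω) [IsProbabilityMeasure P]
    {H : ℝ} (hH0 : 0 < H) {B : Ω → ℝ → ℝ} (hB : IsFractionalBM P H B)
    {t s : ℝ} (hs : 0 ≤ s) (hst : s ≤ t) (k : ℕ) :
    Integrable (fun ω => (B ω t - B ω s) ^ k) P ∧
    ∫ ω, (B ω t - B ω s) ^ k ∂P
      = Real.sqrt ((t - s) ^ (2 * H) / gaussMoment 2) ^ k * gaussMoment k := by
  obtain ⟨hmeas, hgauss, hcov⟩ := hB
  have ht : 0 ≤ t := hs.trans hst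
  have hXm : Measurable fun ω => B ω t - B ω s := (hmeas t).sub (hmeas s)
  obtain ⟨v, hv⟩ := hgauss 2 ![1, -1] ![t, s]
  have heq : (fun ω => ∑ i, ![(1:ℝ), -1] i * B ω (![t, s] i))
      = fun ω => B ω t - B ω s := by
    funext ω
    simp only [Fin.sum_univ_two, Matrix.cons_val_zero, Matrix.cons_val_one, Matrix.head_cons]
    ring
  rw [heq] at hv
  have hint : ∀ i : ℕ, Integrable (fun ω => (B ω t - B ω s) ^ i) P := by
    intro i
    have h1 : Integrable (fun x : ℝ => x ^ i)
        (Measure.map (fun ω => B ω t - B ω s) P) := by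
      rw [hv]; exact integrable_pow_gaussianReal v i
    exact (integrable_map_measure
      (Measurable.aestronglyMeasurable (by fun_prop : Measurable fun x : ℝ => x ^ i))
      hXm.aemeasurable).mp h1
  have hmom : ∀ i : ℕ, ∫ ω, (B ω t - B ω s) ^ i ∂P = Real.sqrt v ^ i * gaussMoment i := by
    intro i
    rw [← integral_pow_gaussianReal, ← hv,
      integral_map hXm.aemeasurable
        (Measurable.aestronglyMeasurable (by fun_prop : Measurable fun x : ℝ => x ^ i))]
  -- second moment via covariance
  have hL2 : ∀ u : ℝ, MemLp (fun ω => B ω u) 2 P := by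
    intro u
    obtain ⟨w, hw⟩ := hgauss 1 ![1] ![u]
    have heq1 : (fun ω => ∑ i, ![(1:ℝ)] i * B ω (![u] i)) = fun ω => B ω u := by
      funext ω
      simp
    rw [heq1] at hw
    refine (memLp_two_iff_integrable_sq (hmeas u).aestronglyMeasurable).mpr ?_
    have h1 : Integrable (fun x : ℝ => x ^ 2) (Measure.map (fun ω => B ω u) P) := by
      rw [hw]; exact integrable_pow_gaussianReal w 2
    exact (integrable_map_measure
      (Measurable.aestronglyMeasurable (by fun_prop : Measurable fun x : ℝ => x ^ 2))
      (hmeas u).aemeasurable).mp h1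
  have hmul : ∀ u r : ℝ, Integrable (fun ω => B ω u * B ω r) P := by
    intro u r
    have h := (hL2 r).smul (φ := fun ω => B ω u) (hL2 u)
      (r := 1)
    rw [memLp_one_iff_integrable] at h
    exact h
  have hsq : ∫ ω, (B ω t - B ω s) ^ 2 ∂P = (t - s) ^ (2 * H) := by
    have hexp : (fun ω => (B ω t - B ω s) ^ 2)
        = fun ω => (B ω t * B ω t - B ω t * B ω s) - (B ω s * B ω t - B ω s * B ω s) := by
      funext ω; ring
    have h11 : Integrable (fun ω => B ω t * B ω t - B ω t * B ω s) P :=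
      (hmul t t).sub (hmul t s)
    have h22 : Integrable (fun ω => B ω s * B ω t - B ω s * B ω s) P :=
      (hmul s t).sub (hmul s s)
    rw [hexp, integral_sub h11 h22,
      integral_sub (hmul t t) (hmul t s), integral_sub (hmul s t) (hmul s s),
      hcov t t ht ht, hcov s t hs ht, hcov t s ht hs, hcov s s hs hs]
    rw [sub_self t, sub_self s, abs_zero, Real.zero_rpow (by positivity),
      abs_sub_comm s t, abs_of_nonneg (sub_nonneg.mpr hst)]
    ring
  have hvval : Real.sqrt v = Real.sqrt ((t - s) ^ (2 * H) / gaussMoment 2) := by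
    have h2 := hmom 2
    rw [hsq, Real.sq_sqrt v.coe_nonneg] at h2
    congr 1
    rw [eq_div_iff (ne_of_gt gaussMoment_two_pos)]
    exact h2.symm
  exact ⟨hint k, by rw [hmom k, hvval]⟩

end FbmAux

/-- Even-power increment sums of fBm: for even `m` there is `C = C(m)` independent of
`j`, `k`, `h` with `‖Σ_{l=j+1}^k (ΔB_l)^m‖_{L²} ≤ C·h^{mH−1}·|t_k − t_j|`. -/
theorem fbm_even_power_increment_sum
    {Ω : Type*} [MeasurableSpace Ω] (P : Measure Ω) [IsProbabilityMeasure P]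
    (H : ℝ) (hH0 : 0 < H) (hH1 : H < 1) (B : Ω → ℝ → ℝ)
    (hB : IsFractionalBM P H B) (m : ℕ) (hm : Even m) (hm1 : 1 ≤ m) :
    ∃ C > 0, ∀ (T : ℝ) (n : ℕ), 0 < T → 0 < n → ∀ j k : ℕ, j < k → k ≤ n →
      (∫ ω, (∑ l ∈ Finset.Ioc j k,
          (B ω ((l : ℝ) * (T / n)) - B ω (((l : ℝ) - 1) * (T / n))) ^ m) ^ 2 ∂P)
            ^ (1 / 2 : ℝ)
        ≤ C * (T / n) ^ ((m : ℝ) * H - 1)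
            * ((k : ℝ) * (T / n) - (j : ℝ) * (T / n)) := by
  have hKnn : 0 ≤ gaussMoment (2 * m) := by
    rw [gaussMoment]
    refine integral_nonneg fun x => ?_
    rw [pow_mul]
    exact pow_nonneg (sq_nonneg x) m
  have hc0nn : 0 ≤ gaussMoment (2 * m) / gaussMoment 2 ^ m :=
    div_nonneg hKnn (pow_nonneg gaussMoment_two_pos.le m)
  refine ⟨Real.sqrt (gaussMoment (2 * m) / gaussMoment 2 ^ m) + 1, by positivity, ?_⟩
  intro T n hT hn j k hjk hkn
  set h : ℝ := T / n with hhdef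
  have hh : 0 < h := div_pos hT (by exact_mod_cast hn)
  have hincr : ∀ l ∈ Finset.Ioc j k,
      Integrable (fun ω => (B ω ((l:ℝ) * h) - B ω (((l:ℝ) - 1) * h)) ^ (2 * m)) P ∧
      ∫ ω, (B ω ((l:ℝ) * h) - B ω (((l:ℝ) - 1) * h)) ^ (2 * m) ∂P
        = Real.sqrt (h ^ (2 * H) / gaussMoment 2) ^ (2 * m) * gaussMoment (2 * m) := by
    intro l hl
    have hl1 : 1 ≤ l := lt_of_le_of_lt (Nat.zero_le j) (Finset.mem_Ioc.mp hl).1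
    have hl1' : (1:ℝ) ≤ (l:ℝ) := by exact_mod_cast hl1
    have hs0 : 0 ≤ ((l:ℝ) - 1) * h := mul_nonneg (by linarith) hh.le
    have hst : ((l:ℝ) - 1) * h ≤ (l:ℝ) * h :=
      mul_le_mul_of_nonneg_right (by linarith) hh.le
    have hts : (l:ℝ) * h - ((l:ℝ) - 1) * h = h := by ring
    have := incr_moment P hH0 hB hs0 hst (2 * m)
    rwa [hts] at this
  -- abbreviations
  have hApos : 0 ≤ h ^ (2 * H) / gaussMoment 2 :=
    div_nonneg (Real.rpow_nonneg hh.le _) gaussMoment_two_pos.le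
  have hA' : Real.sqrt (h ^ (2 * H) / gaussMoment 2) ^ (2 * m) * gaussMoment (2 * m)
      = h ^ (2 * H * (m:ℝ)) * (gaussMoment (2 * m) / gaussMoment 2 ^ m) := by
    rw [pow_mul, Real.sq_sqrt hApos, div_pow, div_mul_eq_mul_div, mul_div_assoc,
      ← Real.rpow_natCast (h ^ (2 * H)) m, ← Real.rpow_mul hh.le]
  -- step 1 : integral bound
  have hsqeq : ∀ (l : ℕ) (ω : Ω),
      ((B ω ((l:ℝ) * h) - B ω (((l:ℝ) - 1) * h)) ^ m) ^ 2
      = (B ω ((l:ℝ) * h) - B ω (((l:ℝ) - 1) * h)) ^ (2 * m) := fun l ω => by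
    rw [← pow_mul, mul_comm m 2]
  have hInt : Integrable (fun ω => ((Finset.Ioc j k).card : ℝ) *
      ∑ l ∈ Finset.Ioc j k, (B ω ((l:ℝ) * h) - B ω (((l:ℝ) - 1) * h)) ^ (2 * m)) P :=
    (integrable_finset_sum _ fun l hl => (hincr l hl).1).const_mul _
  have hle : ∫ ω, (∑ l ∈ Finset.Ioc j k,
        (B ω ((l:ℝ) * h) - B ω (((l:ℝ) - 1) * h)) ^ m) ^ 2 ∂P
      ≤ ∫ ω, ((Finset.Ioc j k).card : ℝ) *
        ∑ l ∈ Finset.Ioc j k, (B ω ((l:ℝ) * h) - B ω (((l:ℝ) - 1) * h)) ^ (2 * m) ∂P := by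
    refine integral_mono_of_nonneg (Filter.Eventually.of_forall fun ω => sq_nonneg _)
      hInt (Filter.Eventually.of_forall fun ω => ?_)
    have hcs := sq_sum_le_card_mul_sum_sq (s := Finset.Ioc j k)
      (f := fun l => (B ω ((l:ℝ) * h) - B ω (((l:ℝ) - 1) * h)) ^ m)
    simpa [hsqeq] using hcs
  have hval : ∫ ω, ((Finset.Ioc j k).card : ℝ) *
        ∑ l ∈ Finset.Ioc j k, (B ω ((l:ℝ) * h) - B ω (((l:ℝ) - 1) * h)) ^ (2 * m) ∂P
      = ((Finset.Ioc j k).card : ℝ) ^ 2 *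
        (h ^ (2 * H * (m:ℝ)) * (gaussMoment (2 * m) / gaussMoment 2 ^ m)) := by
    rw [integral_const_mul, integral_finset_sum _ (fun l hl => (hincr l hl).1),
      Finset.sum_congr rfl (fun l hl => (hincr l hl).2), Finset.sum_const, nsmul_eq_mul,
      hA']
    ring
  -- numbers
  have hNval : (((Finset.Ioc j k).card : ℕ) : ℝ) = (k:ℝ) - (j:ℝ) := by
    rw [Nat.card_Ioc, Nat.cast_sub hjk.le]
  have hb : (k:ℝ) * h - (j:ℝ) * h = (((Finset.Ioc j k).card : ℕ) : ℝ) * h := by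
    rw [hNval]; ring
  have e2 : (h ^ ((m:ℝ) * H - 1)) ^ 2 * h ^ 2 = h ^ (2 * H * (m:ℝ)) := by
    rw [← Real.rpow_natCast (h ^ ((m:ℝ) * H - 1)) 2, ← Real.rpow_mul hh.le,
      ← Real.rpow_natCast h 2, ← Real.rpow_add hh]
    congr 1
    push_cast
    ring
  have key : ∫ ω, (∑ l ∈ Finset.Ioc j k,
        (B ω ((l:ℝ) * h) - B ω (((l:ℝ) - 1) * h)) ^ m) ^ 2 ∂P
      ≤ ((Real.sqrt (gaussMoment (2 * m) / gaussMoment 2 ^ m) + 1) * h ^ ((m:ℝ) * H - 1)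
          * ((k:ℝ) * h - (j:ℝ) * h)) ^ 2 := by
    refine (hle.trans_eq hval).trans ?_
    rw [hb]
    have hexpand : ((Real.sqrt (gaussMoment (2 * m) / gaussMoment 2 ^ m) + 1)
          * h ^ ((m:ℝ) * H - 1) * ((((Finset.Ioc j k).card : ℕ) : ℝ) * h)) ^ 2
        = (Real.sqrt (gaussMoment (2 * m) / gaussMoment 2 ^ m) + 1) ^ 2
          * ((h ^ ((m:ℝ) * H - 1)) ^ 2 * h ^ 2) * (((Finset.Ioc j k).card : ℕ) : ℝ) ^ 2 := by
      ring
    rw [hexpand, e2]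
    have hcc : gaussMoment (2 * m) / gaussMoment 2 ^ m
        ≤ (Real.sqrt (gaussMoment (2 * m) / gaussMoment 2 ^ m) + 1) ^ 2 := by
      nlinarith [Real.sq_sqrt hc0nn, Real.sqrt_nonneg (gaussMoment (2 * m) / gaussMoment 2 ^ m)]
    have hX : 0 < h ^ (2 * H * (m:ℝ)) := Real.rpow_pos_of_pos hh _
    nlinarith [mul_nonneg (mul_nonneg (sub_nonneg.mpr hcc) hX.le)
      (sq_nonneg (((Finset.Ioc j k).card : ℕ) : ℝ))]
  have hRHS : 0 ≤ (Real.sqrt (gaussMoment (2 * m) / gaussMoment 2 ^ m) + 1)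
      * h ^ ((m:ℝ) * H - 1) * ((k:ℝ) * h - (j:ℝ) * h) := by
    rw [hb]
    positivity
  calc (∫ ω, (∑ l ∈ Finset.Ioc j k,
        (B ω ((l:ℝ) * h) - B ω (((l:ℝ) - 1) * h)) ^ m) ^ 2 ∂P) ^ (1 / 2 : ℝ)
      ≤ (((Real.sqrt (gaussMoment (2 * m) / gaussMoment 2 ^ m) + 1) * h ^ ((m:ℝ) * H - 1)
          * ((k:ℝ) * h - (j:ℝ) * h)) ^ 2) ^ (1 / 2 : ℝ) :=
        Real.rpow_le_rpow (integral_nonneg fun ω => sq_nonneg _) key (by norm_num)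
    _ = (Real.sqrt (gaussMoment (2 * m) / gaussMoment 2 ^ m) + 1) * h ^ ((m:ℝ) * H - 1)
          * ((k:ℝ) * h - (j:ℝ) * h) := by
        rw [← Real.rpow_natCast ((Real.sqrt (gaussMoment (2 * m) / gaussMoment 2 ^ m) + 1)
          * h ^ ((m:ℝ) * H - 1) * ((k:ℝ) * h - (j:ℝ) * h)) 2, ← Real.rpow_mul hRHS]
        norm_num
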